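/- Let N ≥ 2 and let K satisfy the kernel condition. There exists a constant C, depending only on N and C₀, such that for every finite positive Radon measure μ on ℝ^N and all points x, y ∈ ℝ^N with r := |x−y| > 0, if ν denotes the restriction of μ to the complement of the ball B(x,2r), then |∫ (K(y−w) − K(x−w)) dν(w)| ≤ C · |x−y| · (M(μ)(x) + T*(μ)(x)). -/

import Mathlib

open MeasureTheory Metric Filter
open scoped ENNReal Topology NNReal

/-- The kernel condition: `K` is twice continuously differentiable off the origin
and `|∇^j K(x)| ≤ C₀ |x|^{-(N-1+j)}` for `j = 0, 1, 2` and all `x ≠ 0`. -/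
def KernelCond (N : ℕ) (C₀ : ℝ) (K : EuclideanSpace ℝ (Fin N) → ℝ) : Prop :=
  ContDiffOn ℝ 2 K {(0 : EuclideanSpace ℝ (Fin N))}ᶜ ∧
    ∀ j : ℕ, j ≤ 2 → ∀ x : EuclideanSpace ℝ (Fin N), x ≠ 0 →
      ‖iteratedFDeriv ℝ j K x‖ ≤ C₀ * ‖x‖ ^ (-(N - 1 + j : ℝ))

/-- The Hardy–Littlewood maximal function of a (positive) measure:
`M(μ)(x) = sup_{r>0} μ(B(x,r)) / |B(x,r)|`. -/
noncomputable def maxFn {N : ℕ} (μ : Measure (EuclideanSpace ℝ (Fin N)))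
    (x : EuclideanSpace ℝ (Fin N)) : ℝ≥0∞ :=
  ⨆ (r : ℝ) (_ : 0 < r), μ (ball x r) / volume (ball x r)

/-- The maximal singular integral `T*(μ)(x) = sup_{ε>0} |∫_{|x-y|>ε} ∇K(x-y) dμ(y)|`
associated with the gradient kernel `∇K`, for a positive measure `μ`. -/
noncomputable def maxSing {N : ℕ} (K : EuclideanSpace ℝ (Fin N) → ℝ)
    (μ : Measure (EuclideanSpace ℝ (Fin N))) (x : EuclideanSpace ℝ (Fin N)) : ℝ≥0∞ :=
  ⨆ (ε : ℝ) (_ : 0 < ε),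
    ENNReal.ofReal ‖∫ y in {y | ε < ‖x - y‖}, gradient K (x - y) ∂μ‖

variable {N : ℕ} {C₀ : ℝ} {K : EuclideanSpace ℝ (Fin N) → ℝ}

lemma KC.diffAt (hK : KernelCond N C₀ K) {z : EuclideanSpace ℝ (Fin N)} (hz : z ≠ 0) :
    DifferentiableAt ℝ K z := by
  have h := (hK.1.contDiffAt (isOpen_compl_singleton.mem_nhds (by simpa using hz)))
  exact h.differentiableAt (by norm_num)

lemma KC.fderiv_contDiffOn (hK : KernelCond N C₀ K) :
    ContDiffOn ℝ 1 (fderiv ℝ K) {(0 : EuclideanSpace ℝ (Fin N))}ᶜ :=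
  hK.1.fderiv_of_isOpen isOpen_compl_singleton (by norm_num)

lemma KC.fderiv_diffAt (hK : KernelCond N C₀ K) {z : EuclideanSpace ℝ (Fin N)} (hz : z ≠ 0) :
    DifferentiableAt ℝ (fderiv ℝ K) z := by
  have h := ((KC.fderiv_contDiffOn hK).contDiffAt (isOpen_compl_singleton.mem_nhds (by simpa using hz)))
  exact h.differentiableAt (by norm_num)

lemma KC.norm_K_le (hK : KernelCond N C₀ K) {z : EuclideanSpace ℝ (Fin N)} (hz : z ≠ 0) :
    |K z| ≤ C₀ * ‖z‖ ^ (-((N : ℝ) - 1)) := by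
  have h := hK.2 0 (by norm_num) z hz
  rw [norm_iteratedFDeriv_zero, Real.norm_eq_abs] at h
  convert h using 3
  push_cast; ring

lemma KC.norm_fderiv_le (hK : KernelCond N C₀ K) {z : EuclideanSpace ℝ (Fin N)} (hz : z ≠ 0) :
    ‖fderiv ℝ K z‖ ≤ C₀ * ‖z‖ ^ (-(N : ℝ)) := by
  have h := hK.2 1 (by norm_num) z hz
  have e1 : ‖fderiv ℝ K z‖ = ‖iteratedFDeriv ℝ 1 K z‖ := by
    rw [← norm_iteratedFDeriv_fderiv (n := 0), norm_iteratedFDeriv_zero]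
  rw [e1]
  convert h using 3
  push_cast; ring

lemma KC.norm_fderiv2_le (hK : KernelCond N C₀ K) {z : EuclideanSpace ℝ (Fin N)} (hz : z ≠ 0) :
    ‖fderiv ℝ (fderiv ℝ K) z‖ ≤ C₀ * ‖z‖ ^ (-((N : ℝ) + 1)) := by
  have h := hK.2 2 (by norm_num) z hz
  have e1 : ‖fderiv ℝ (fderiv ℝ K) z‖ = ‖iteratedFDeriv ℝ 2 K z‖ := by
    rw [← norm_iteratedFDeriv_fderiv (n := 1),
      ← norm_iteratedFDeriv_fderiv (n := 0), norm_iteratedFDeriv_zero]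
  rw [e1]
  convert h using 3
  push_cast; ring

lemma KC.c0_nonneg (hN : 2 ≤ N) (hK : KernelCond N C₀ K) : 0 ≤ C₀ := by
  have : Nontrivial (EuclideanSpace ℝ (Fin N)) :=
    Module.nontrivial_of_finrank_pos (R := ℝ) (by rw [finrank_euclideanSpace_fin]; omega)
  obtain ⟨z, hz⟩ := exists_ne (0 : EuclideanSpace ℝ (Fin N))
  have h := (norm_nonneg _).trans (hK.2 0 (by norm_num) z hz)
  have hp : (0 : ℝ) < ‖z‖ ^ (-(N - 1 + (0:ℕ) : ℝ)) :=
    Real.rpow_pos_of_pos (norm_pos_iff.2 hz) _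
  exact (mul_nonneg_iff_of_pos_right hp).1 h

lemma KC.taylor (hK : KernelCond N C₀ K) (hC₀ : 0 ≤ C₀)
    {a b : EuclideanSpace ℝ (Fin N)} {r : ℝ} (hr : 0 < r)
    (hba : ‖b - a‖ ≤ r) (ha : 2 * r ≤ ‖a‖) :
    ‖K b - K a - fderiv ℝ K a (b - a)‖
      ≤ C₀ * 2 ^ (N + 1) * ((‖a‖ ^ (N + 1))⁻¹ * r) * ‖b - a‖ := by
  have hapos : (0 : ℝ) < ‖a‖ := lt_of_lt_of_le (by linarith) ha
  set s := closedBall a r with hs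
  have hconv : Convex ℝ s := convex_closedBall a r
  have hmem : ∀ z ∈ s, z ≠ 0 ∧ ‖a‖ / 2 ≤ ‖z‖ := by
    intro z hz
    have h1 : ‖z - a‖ ≤ r := by rwa [mem_closedBall, dist_eq_norm] at hz
    have h2 : ‖a‖ - ‖z‖ ≤ ‖z - a‖ := by
      have := norm_sub_norm_le (a - z) (0 - z)
      simpa [norm_sub_rev] using (abs_le.1 (abs_norm_sub_norm_le a z)).2.trans le_rfl
    have h3 : ‖a‖ / 2 ≤ ‖z‖ := by linarith
    exact ⟨norm_pos_iff.1 (by linarith), h3⟩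
  set C₂ : ℝ := C₀ * (‖a‖ / 2) ^ (-((N : ℝ) + 1)) with hC₂
  have hC₂0 : 0 ≤ C₂ := mul_nonneg hC₀ (Real.rpow_nonneg (by positivity) _)
  have bound2 : ∀ z ∈ s, ‖fderiv ℝ (fderiv ℝ K) z‖ ≤ C₂ := by
    intro z hz
    obtain ⟨hz0, hz2⟩ := hmem z hz
    refine (KC.norm_fderiv2_le hK hz0).trans ?_
    exact mul_le_mul_of_nonneg_left
      (Real.rpow_le_rpow_of_nonpos (by positivity) hz2 (neg_nonpos.mpr (by positivity))) hC₀
  have lip : ∀ z ∈ s, ‖fderiv ℝ K z - fderiv ℝ K a‖ ≤ C₂ * r := by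
    intro z hz
    have := hconv.norm_image_sub_le_of_norm_fderiv_le
      (fun w hw => KC.fderiv_diffAt hK (hmem w hw).1) bound2
      (mem_closedBall_self hr.le) hz
    refine this.trans ?_
    have : ‖z - a‖ ≤ r := by rwa [mem_closedBall, dist_eq_norm] at hz
    exact mul_le_mul_of_nonneg_left this hC₂0
  have hbs : b ∈ s := by rwa [mem_closedBall, dist_eq_norm]
  have main := hconv.norm_image_sub_le_of_norm_fderiv_le'
    (fun w hw => KC.diffAt hK (hmem w hw).1) lip (mem_closedBall_self hr.le) hbs
  refine main.trans ?_
  have key : C₂ * r = C₀ * 2 ^ (N + 1) * ((‖a‖ ^ (N + 1))⁻¹ * r) := by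
    rw [hC₂, show -((N : ℝ) + 1) = -((N + 1 : ℕ) : ℝ) by push_cast; ring,
      Real.rpow_neg (by positivity), Real.rpow_natCast, div_pow, inv_div, div_eq_mul_inv]
    ring
  rw [key]

lemma exists_dyadic {r d : ℝ} (hr : 0 < r) (hd : 2 * r ≤ d) :
    ∃ k : ℕ, 2 ^ (k + 1) * r ≤ d ∧ d < 2 ^ (k + 2) * r := by
  have h2r : (0 : ℝ) < 2 * r := by linarith
  set t : ℝ := d / (2 * r) with hts
  have ht : 1 ≤ t := (one_le_div h2r).2 hd
  set m : ℕ := ⌊t⌋₊ with hm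
  have hm1 : 1 ≤ m := Nat.le_floor (by exact_mod_cast ht)
  refine ⟨Nat.log 2 m, ?_, ?_⟩
  · have h1 : (2 : ℝ) ^ Nat.log 2 m ≤ m := by
      exact_mod_cast Nat.pow_log_le_self 2 (by omega)
    have h2 : (m : ℝ) ≤ t := Nat.floor_le (by linarith)
    have : (2 : ℝ) ^ Nat.log 2 m * (2 * r) ≤ t * (2 * r) :=
      mul_le_mul_of_nonneg_right (h1.trans h2) h2r.le
    calc 2 ^ (Nat.log 2 m + 1) * r = 2 ^ Nat.log 2 m * (2 * r) := by ring
    _ ≤ t * (2 * r) := this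
    _ = d := by rw [hts, div_mul_cancel₀ _ h2r.ne']
  · have h1 : m < 2 ^ (Nat.log 2 m + 1) := Nat.lt_pow_succ_log_self (by norm_num) m
    have h2 : t < m + 1 := Nat.lt_floor_add_one t
    have h3 : (m : ℝ) + 1 ≤ 2 ^ (Nat.log 2 m + 1) := by exact_mod_cast Nat.succ_le_of_lt h1
    have : t * (2 * r) < 2 ^ (Nat.log 2 m + 1) * (2 * r) :=
      mul_lt_mul_of_pos_right (lt_of_lt_of_le h2 h3) h2r
    calc d = t * (2 * r) := by rw [hts, div_mul_cancel₀ _ h2r.ne']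
    _ < 2 ^ (Nat.log 2 m + 1) * (2 * r) := this
    _ = 2 ^ (Nat.log 2 m + 2) * r := by ring

lemma meas_ball_le_maxFn (μ : Measure (EuclideanSpace ℝ (Fin N)))
    (x : EuclideanSpace ℝ (Fin N)) {R : ℝ} (hR : 0 < R) :
    μ (ball x R) ≤ volume (ball x R) * maxFn μ x := by
  have h1 : μ (ball x R) / volume (ball x R) ≤ maxFn μ x :=
    le_iSup₂ (f := fun r (_ : 0 < r) => μ (ball x r) / volume (ball x r)) R hR
  have h0 : volume (ball x R) ≠ 0 := (measure_ball_pos volume x hR).ne'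
  have ht : volume (ball x R) ≠ ⊤ := measure_ball_lt_top.ne
  calc μ (ball x R) = μ (ball x R) / volume (ball x R) * volume (ball x R) :=
        (ENNReal.div_mul_cancel h0 ht).symm
  _ ≤ maxFn μ x * volume (ball x R) := mul_le_mul_left h1 _
  _ = volume (ball x R) * maxFn μ x := mul_comm _ _

lemma gradMeasurable (K : EuclideanSpace ℝ (Fin N) → ℝ) (x : EuclideanSpace ℝ (Fin N)) :
    Measurable (fun w => gradient K (x - w)) :=
  ((LinearIsometryEquiv.continuous _).measurable.comp (measurable_fderiv ℝ K)).comp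
    (measurable_const.sub measurable_id)

lemma norm_gradient_eq (K : EuclideanSpace ℝ (Fin N) → ℝ) (z : EuclideanSpace ℝ (Fin N)) :
    ‖gradient K z‖ = ‖fderiv ℝ K z‖ :=
  LinearIsometryEquiv.norm_map _ _

lemma claimC (hK : KernelCond N C₀ K) (hC₀ : 0 ≤ C₀)
    (μ : Measure (EuclideanSpace ℝ (Fin N))) [IsFiniteMeasure μ]
    (x : EuclideanSpace ℝ (Fin N)) {r : ℝ} (hr : 0 < r) :
    ENNReal.ofReal ‖∫ w in (ball x (2 * r))ᶜ, gradient K (x - w) ∂μ‖ ≤ maxSing K μ x := by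
  set g : EuclideanSpace ℝ (Fin N) → EuclideanSpace ℝ (Fin N) :=
    fun w => gradient K (x - w) with hg
  have hgm : Measurable g := gradMeasurable K x
  set S : Set (EuclideanSpace ℝ (Fin N)) := (ball x (2 * r))ᶜ with hSdef
  have hSm : MeasurableSet S := measurableSet_ball.compl
  have hSmem : ∀ w, w ∈ S ↔ 2 * r ≤ ‖x - w‖ := by
    intro w
    rw [Set.mem_compl_iff, mem_ball, not_lt, dist_eq_norm, norm_sub_rev]
  have hgnorm : ∀ w : EuclideanSpace ℝ (Fin N), r ≤ ‖x - w‖ →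
      ‖g w‖ ≤ C₀ * r ^ (-(N : ℝ)) := by
    intro w hw
    rw [hg, norm_gradient_eq]
    refine (KC.norm_fderiv_le hK (norm_pos_iff.1 (lt_of_lt_of_le hr hw))).trans ?_
    exact mul_le_mul_of_nonneg_left
      (Real.rpow_le_rpow_of_nonpos hr hw (neg_nonpos.mpr (by positivity))) hC₀
  set ε : ℕ → ℝ := fun n => 2 * r - r / (n + 1) with hε
  have hεlt : ∀ n, ε n < 2 * r := fun n => by
    have : 0 < r / (n + 1 : ℝ) := by positivity
    simp only [hε]; linarith
  have hεge : ∀ n, r ≤ ε n := fun n => by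
    have : r / ((n : ℝ) + 1) ≤ r / 1 := by
      apply div_le_div_of_nonneg_left hr.le one_pos
      · exact_mod_cast Nat.succ_le_succ (Nat.zero_le n)
    simp only [hε]
    rw [div_one] at this
    linarith
  have hεpos : ∀ n, 0 < ε n := fun n => lt_of_lt_of_le hr (hεge n)
  have hEm : ∀ n, MeasurableSet {w : EuclideanSpace ℝ (Fin N) | ε n < ‖x - w‖} := fun n =>
    (isOpen_lt continuous_const ((continuous_const.sub continuous_id).norm)).measurableSet
  set F : ℕ → EuclideanSpace ℝ (Fin N) :=
    fun n => ∫ y in {y | ε n < ‖x - y‖}, gradient K (x - y) ∂μ with hF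
  have step1 : ∀ n, ENNReal.ofReal ‖F n‖ ≤ maxSing K μ x := fun n =>
    le_iSup₂ (f := fun e (_ : 0 < e) =>
      ENNReal.ofReal ‖∫ y in {y | e < ‖x - y‖}, gradient K (x - y) ∂μ‖) (ε n) (hεpos n)
  have step2 : Tendsto F atTop (𝓝 (∫ w in S, g w ∂μ)) := by
    have key := tendsto_integral_of_dominated_convergence
      (F := fun n => ({w : EuclideanSpace ℝ (Fin N) | ε n < ‖x - w‖}).indicator g)
      (f := S.indicator g) (μ := μ)
      (bound := fun _ => C₀ * r ^ (-(N : ℝ)))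
      (fun n => hgm.aestronglyMeasurable.indicator (hEm n))
      (integrable_const _)
      (fun n => Filter.Eventually.of_forall (fun w => by
        show ‖({w : EuclideanSpace ℝ (Fin N) | ε n < ‖x - w‖}).indicator g w‖
          ≤ C₀ * r ^ (-(N : ℝ))
        by_cases hw : w ∈ {w : EuclideanSpace ℝ (Fin N) | ε n < ‖x - w‖}
        · rw [Set.indicator_of_mem hw]
          exact hgnorm w ((hεge n).trans (le_of_lt hw))
        · rw [Set.indicator_of_notMem hw, norm_zero]
          positivity))
      (Filter.Eventually.of_forall (fun w => by
        by_cases hw : 2 * r ≤ ‖x - w‖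
        · have h1 : ∀ n, ({w : EuclideanSpace ℝ (Fin N) | ε n < ‖x - w‖}).indicator g w = g w :=
            fun n => Set.indicator_of_mem
              (show w ∈ {w : EuclideanSpace ℝ (Fin N) | ε n < ‖x - w‖} from
                lt_of_lt_of_le (hεlt n) hw) g
          have h2 : S.indicator g w = g w := Set.indicator_of_mem ((hSmem w).2 hw) g
          rw [h2]
          exact tendsto_const_nhds.congr (fun n => (h1 n).symm)
        · push_neg at hw
          have h2 : S.indicator g w = 0 := Set.indicator_of_notMem
            (fun hc => absurd ((hSmem w).1 hc) (not_le.mpr hw)) g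
          rw [h2]
          have h0 : Tendsto (fun n : ℕ => r / (n + 1)) atTop (𝓝 0) := by
            have := tendsto_one_div_add_atTop_nhds_zero_nat.const_mul r
            simpa [mul_one_div, div_eq_mul_inv] using this
          have ht : Tendsto ε atTop (𝓝 (2 * r)) := by
            have := tendsto_const_nhds (x := 2 * r) (f := atTop (α := ℕ)) |>.sub h0
            simpa [hε] using this
          have hev : ∀ᶠ n in atTop, ‖x - w‖ < ε n := ht.eventually (eventually_gt_nhds hw)
          refine tendsto_const_nhds.congr' ?_
          filter_upwards [hev] with n hn
          exact (Set.indicator_of_notMem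
            (show w ∉ {w : EuclideanSpace ℝ (Fin N) | ε n < ‖x - w‖} from
              fun hc => absurd hn (not_lt.mpr (le_of_lt hc))) g).symm))
    rw [integral_indicator hSm] at key
    have : ∀ n, (∫ w, ({w : EuclideanSpace ℝ (Fin N) | ε n < ‖x - w‖}).indicator g w ∂μ) = F n :=
      fun n => integral_indicator (hEm n)
    exact key.congr this
  have step3 : Tendsto (fun n => ENNReal.ofReal ‖F n‖) atTop
      (𝓝 (ENNReal.ofReal ‖∫ w in S, g w ∂μ‖)) :=
    (ENNReal.continuous_ofReal.tendsto _).comp ((continuous_norm.tendsto _).comp step2)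
  exact le_of_tendsto step3 (Filter.Eventually.of_forall step1)

open scoped RealInnerProductSpace


/-- For a kernel `K` satisfying the kernel condition there is `C = C(N, C₀)` such that
for every finite positive Radon measure `μ` and all `x ≠ y` (with `r = |x−y|`), the part
`ν` of `μ` living off the ball `B(x,2r)` satisfies
`|∫ (K(y−w) − K(x−w)) dν(w)| ≤ C |x−y| (M(μ)(x) + T*(μ)(x))`. -/
theorem far_part_increment_estimate
    (N : ℕ) (hN : 2 ≤ N) (C₀ : ℝ)
    (K : EuclideanSpace ℝ (Fin N) → ℝ) (hK : KernelCond N C₀ K) :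
    ∃ C : ℝ, 0 < C ∧ ∀ μ : Measure (EuclideanSpace ℝ (Fin N)), IsFiniteMeasure μ →
      ∀ x y : EuclideanSpace ℝ (Fin N), x ≠ y →
        ENNReal.ofReal
            |∫ w in (ball x (2 * ‖x - y‖))ᶜ, (K (y - w) - K (x - w)) ∂μ| ≤
          ENNReal.ofReal (C * ‖x - y‖) * (maxFn μ x + maxSing K μ x) := by
  classical
  have hC₀ : 0 ≤ C₀ := KC.c0_nonneg hN hK
  have hnt : Nontrivial (EuclideanSpace ℝ (Fin N)) :=
    Module.nontrivial_of_finrank_pos (R := ℝ) (by rw [finrank_euclideanSpace_fin]; omega)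
  set V : ℝ≥0∞ := volume (ball (0 : EuclideanSpace ℝ (Fin N)) 1) with hVdef
  have hVne : V ≠ ⊤ := measure_ball_lt_top.ne
  set Vr : ℝ := V.toReal with hVrdef
  have hVr : V = ENNReal.ofReal Vr := (ENNReal.ofReal_toReal hVne).symm
  have hVr0 : 0 ≤ Vr := ENNReal.toReal_nonneg
  set C : ℝ := C₀ * 2 ^ (2 * N + 2) * Vr + C₀ * 2 ^ (N + 1) + 1 with hCdef
  have hCpos : 0 < C := by rw [hCdef]; positivity
  refine ⟨C, hCpos, ?_⟩
  intro μ hμ x y hxy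
  haveI := hμ
  set r : ℝ := ‖x - y‖ with hrdef
  have hr : 0 < r := norm_pos_iff.2 (sub_ne_zero.2 hxy)
  set S : Set (EuclideanSpace ℝ (Fin N)) := (ball x (2 * r))ᶜ with hSdef
  have hSm : MeasurableSet S := measurableSet_ball.compl
  have hSmem : ∀ w, w ∈ S ↔ 2 * r ≤ ‖x - w‖ := by
    intro w
    rw [hSdef, Set.mem_compl_iff, mem_ball, not_lt, dist_eq_norm, norm_sub_rev]
  have hxw : ∀ w ∈ S, 2 * r ≤ ‖x - w‖ := fun w hw => (hSmem w).1 hw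
  have hxw0 : ∀ w ∈ S, x - w ≠ 0 := fun w hw =>
    norm_pos_iff.1 (lt_of_lt_of_le (by linarith) (hxw w hw))
  have hyw : ∀ w ∈ S, r ≤ ‖y - w‖ := by
    intro w hw
    have h1 : ‖x - w‖ ≤ ‖x - y‖ + ‖y - w‖ := norm_sub_le_norm_sub_add_norm_sub x y w
    have := hxw w hw
    rw [← hrdef] at h1
    linarith
  have hyw0 : ∀ w ∈ S, y - w ≠ 0 := fun w hw =>
    norm_pos_iff.1 (lt_of_lt_of_le hr (hyw w hw))
  set g : EuclideanSpace ℝ (Fin N) → EuclideanSpace ℝ (Fin N) :=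
    fun w => gradient K (x - w) with hgdef
  have hgm : Measurable g := gradMeasurable K x
  set h : EuclideanSpace ℝ (Fin N) → ℝ :=
    fun w => K (y - w) - K (x - w) - ⟪g w, y - x⟫ with hhdef
  have hinner : ∀ w, ⟪g w, y - x⟫ = fderiv ℝ K (x - w) (y - x) := fun w =>
    InnerProductSpace.toDual_symm_apply
  -- pointwise Taylor bound on S
  set c₁ : ℝ := C₀ * 2 ^ (N + 1) * r * r with hc₁def
  have hc₁0 : 0 ≤ c₁ := by positivity
  have htaylor : ∀ w ∈ S, |h w| ≤ c₁ * (‖x - w‖ ^ (N + 1))⁻¹ := by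
    intro w hw
    have key := KC.taylor hK hC₀ hr (a := x - w) (b := y - w)
      (by rw [sub_sub_sub_cancel_right, norm_sub_rev, ← hrdef])
      (hxw w hw)
    rw [sub_sub_sub_cancel_right] at key
    have hnyx : ‖y - x‖ = r := by rw [norm_sub_rev, ← hrdef]
    rw [hnyx] at key
    calc |h w| = ‖K (y - w) - K (x - w) - fderiv ℝ K (x - w) (y - x)‖ := by
          simp only [hhdef]
          rw [Real.norm_eq_abs, hinner w]
    _ ≤ C₀ * 2 ^ (N + 1) * ((‖x - w‖ ^ (N + 1))⁻¹ * r) * r := key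
    _ = c₁ * (‖x - w‖ ^ (N + 1))⁻¹ := by rw [hc₁def]; ring
  -- integrability on S
  have hb3 : ∀ w ∈ S, ‖g w‖ ≤ C₀ * r ^ (-(N : ℝ)) := by
    intro w hw
    rw [hgdef, norm_gradient_eq]
    refine (KC.norm_fderiv_le hK (hxw0 w hw)).trans ?_
    refine mul_le_mul_of_nonneg_left ?_ hC₀
    exact Real.rpow_le_rpow_of_nonpos hr (le_trans (by linarith) (hxw w hw))
      (neg_nonpos.mpr (by positivity))
  have hKbd : ∀ (z : EuclideanSpace ℝ (Fin N)), z ≠ 0 → r ≤ ‖z‖ →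
      |K z| ≤ C₀ * r ^ (-((N : ℝ) - 1)) := by
    intro z hz hrz
    refine (KC.norm_K_le hK hz).trans ?_
    refine mul_le_mul_of_nonneg_left ?_ hC₀
    refine Real.rpow_le_rpow_of_nonpos hr hrz (neg_nonpos.mpr ?_)
    have : (2 : ℝ) ≤ (N : ℝ) := by exact_mod_cast hN
    linarith
  have hKym : AEStronglyMeasurable (fun w => K (y - w)) (μ.restrict S) := by
    refine ContinuousOn.aestronglyMeasurable ?_ hSm
    refine (hK.1.continuousOn.comp ((continuous_const.sub continuous_id).continuousOn) ?_)
    intro w hw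
    simpa using hyw0 w hw
  have hKxm : AEStronglyMeasurable (fun w => K (x - w)) (μ.restrict S) := by
    refine ContinuousOn.aestronglyMeasurable ?_ hSm
    refine (hK.1.continuousOn.comp ((continuous_const.sub continuous_id).continuousOn) ?_)
    intro w hw
    simpa using hxw0 w hw
  have hg_int : Integrable g (μ.restrict S) := by
    refine Integrable.mono' (integrable_const (C₀ * r ^ (-(N : ℝ))))
      (hgm.aestronglyMeasurable.restrict) ?_
    exact (ae_restrict_iff' hSm).2 (Filter.Eventually.of_forall hb3)
  have hinner_int : Integrable (fun w => ⟪g w, y - x⟫) (μ.restrict S) := by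
    refine Integrable.mono' (integrable_const (C₀ * r ^ (-(N : ℝ)) * ‖y - x‖))
      ((hgm.aestronglyMeasurable.restrict).inner aestronglyMeasurable_const) ?_
    refine (ae_restrict_iff' hSm).2 (Filter.Eventually.of_forall (fun w hw => ?_))
    calc ‖⟪g w, y - x⟫‖ ≤ ‖g w‖ * ‖y - x‖ := norm_inner_le_norm _ _
    _ ≤ C₀ * r ^ (-(N : ℝ)) * ‖y - x‖ :=
        mul_le_mul_of_nonneg_right (hb3 w hw) (norm_nonneg _)
  have hf1_int : Integrable (fun w => K (y - w) - K (x - w)) (μ.restrict S) := by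
    refine Integrable.mono' (integrable_const (2 * (C₀ * r ^ (-((N : ℝ) - 1)))))
      (hKym.sub hKxm) ?_
    refine (ae_restrict_iff' hSm).2 (Filter.Eventually.of_forall (fun w hw => ?_))
    have h1 := hKbd _ (hyw0 w hw) (hyw w hw)
    have h2 := hKbd _ (hxw0 w hw) (le_trans (by linarith) (hxw w hw))
    calc ‖K (y - w) - K (x - w)‖ ≤ |K (y - w)| + |K (x - w)| := abs_sub _ _
    _ ≤ 2 * (C₀ * r ^ (-((N : ℝ) - 1))) := by linarith
  have hh_int : Integrable h (μ.restrict S) := hf1_int.sub hinner_int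
  -- split
  have hsplit : ∫ w in S, (K (y - w) - K (x - w)) ∂μ
      = (∫ w in S, h w ∂μ) + ∫ w in S, ⟪g w, y - x⟫ ∂μ := by
    rw [← integral_add hh_int hinner_int]
    refine integral_congr_ae (Filter.Eventually.of_forall (fun w => ?_))
    rw [hhdef]; ring
  -- main (gradient) term
  have hIeq : ∫ w in S, ⟪g w, y - x⟫ ∂μ = ⟪y - x, ∫ w in S, g w ∂μ⟫ := by
    rw [show (fun w => ⟪g w, y - x⟫) = fun w => ⟪y - x, g w⟫ by
      funext w; rw [real_inner_comm]]
    exact integral_inner hg_int (y - x)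
  have hmain : ENNReal.ofReal |∫ w in S, ⟪g w, y - x⟫ ∂μ|
      ≤ ENNReal.ofReal r * maxSing K μ x := by
    rw [hIeq]
    have h1 : |⟪y - x, ∫ w in S, g w ∂μ⟫| ≤ r * ‖∫ w in S, g w ∂μ‖ := by
      refine (abs_real_inner_le_norm _ _).trans ?_
      rw [norm_sub_rev, ← hrdef]
    refine (ENNReal.ofReal_le_ofReal h1).trans ?_
    rw [ENNReal.ofReal_mul hr.le]
    exact mul_le_mul_right (claimC hK hC₀ μ x hr) _
  -- error term via annuli
  set A : ℕ → Set (EuclideanSpace ℝ (Fin N)) :=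
    fun k => ball x (2 ^ (k + 2) * r) \ ball x (2 ^ (k + 1) * r) with hAdef
  have hAm : ∀ k, MeasurableSet (A k) := fun k =>
    measurableSet_ball.diff measurableSet_ball
  have hAsub : S ⊆ ⋃ k, A k := by
    intro w hw
    have hd : 2 * r ≤ dist w x := by
      rw [dist_eq_norm, norm_sub_rev]; exact hxw w hw
    obtain ⟨k, hk1, hk2⟩ := exists_dyadic hr hd
    exact Set.mem_iUnion.2 ⟨k, ⟨mem_ball.2 hk2, fun hc => absurd (mem_ball.1 hc) (not_lt.2 hk1)⟩⟩
  have hAnorm : ∀ k, ∀ w ∈ A k, 2 ^ (k + 1) * r ≤ ‖x - w‖ := by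
    intro k w hw
    have := hw.2
    rw [mem_ball, not_lt, dist_eq_norm, norm_sub_rev] at this
    exact this
  have herr : ENNReal.ofReal |∫ w in S, h w ∂μ|
      ≤ ENNReal.ofReal (C₀ * 2 ^ (2 * N + 1) * Vr * r) * maxFn μ x := by
    have t1 : ENNReal.ofReal |∫ w in S, h w ∂μ|
        ≤ ∫⁻ w in S, ENNReal.ofReal |h w| ∂μ := by
      have habs0 : |∫ w in S, h w ∂μ| ≤ ∫ w in S, |h w| ∂μ := by
        simpa [Real.norm_eq_abs] using
          norm_integral_le_integral_norm (f := h) (μ := μ.restrict S)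
      refine le_trans (ENNReal.ofReal_le_ofReal habs0) ?_
      rw [ofReal_integral_eq_lintegral_ofReal hh_int.abs
        (Filter.Eventually.of_forall (fun w => abs_nonneg _))]
    have t2 : ∫⁻ w in S, ENNReal.ofReal |h w| ∂μ
        ≤ ∫⁻ w in S, ENNReal.ofReal (c₁ * (‖x - w‖ ^ (N + 1))⁻¹) ∂μ := by
      refine lintegral_mono_ae ((ae_restrict_iff' hSm).2
        (Filter.Eventually.of_forall (fun w hw => ?_)))
      exact ENNReal.ofReal_le_ofReal (htaylor w hw)
    have t3 : ∫⁻ w in S, ENNReal.ofReal (c₁ * (‖x - w‖ ^ (N + 1))⁻¹) ∂μ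
        ≤ ∑' k, ∫⁻ w in A k, ENNReal.ofReal (c₁ * (‖x - w‖ ^ (N + 1))⁻¹) ∂μ :=
      le_trans (lintegral_mono_set hAsub) (lintegral_iUnion_le _ _)
    have t4 : ∀ k, ∫⁻ w in A k, ENNReal.ofReal (c₁ * (‖x - w‖ ^ (N + 1))⁻¹) ∂μ
        ≤ ENNReal.ofReal (c₁ * ((2 ^ (k + 1) * r) ^ (N + 1))⁻¹) * μ (ball x (2 ^ (k + 2) * r)) := by
      intro k
      have hconst : ∫⁻ w in A k, ENNReal.ofReal (c₁ * (‖x - w‖ ^ (N + 1))⁻¹) ∂μ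
          ≤ ∫⁻ _ in A k, ENNReal.ofReal (c₁ * ((2 ^ (k + 1) * r) ^ (N + 1))⁻¹) ∂μ := by
        refine lintegral_mono_ae ((ae_restrict_iff' (hAm k)).2
          (Filter.Eventually.of_forall (fun w hw => ?_)))
        refine ENNReal.ofReal_le_ofReal (mul_le_mul_of_nonneg_left ?_ hc₁0)
        refine inv_anti₀ (by positivity) ?_
        exact pow_le_pow_left₀ (by positivity) (hAnorm k w hw) _
      rw [setLIntegral_const] at hconst
      refine hconst.trans (mul_le_mul_right (measure_mono (Set.diff_subset)) _)
    have t5 : ∀ k, μ (ball x (2 ^ (k + 2) * r))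
        ≤ ENNReal.ofReal ((2 ^ (k + 2) * r) ^ N) * V * maxFn μ x := by
      intro k
      have hR : (0 : ℝ) < 2 ^ (k + 2) * r := by positivity
      have := meas_ball_le_maxFn μ x hR
      rwa [show volume (ball x (2 ^ (k + 2) * r)) = ENNReal.ofReal ((2 ^ (k + 2) * r) ^ N) * V by
        rw [hVdef, Measure.addHaar_ball volume x hR.le, finrank_euclideanSpace_fin]] at this
    have t6 : ∀ k, ENNReal.ofReal (c₁ * ((2 ^ (k + 1) * r) ^ (N + 1))⁻¹)
          * (ENNReal.ofReal ((2 ^ (k + 2) * r) ^ N) * V * maxFn μ x)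
        = (ENNReal.ofReal (C₀ * 2 ^ (2 * N) * r) * (V * maxFn μ x)) * (2⁻¹ : ℝ≥0∞) ^ k := by
      intro k
      have hreal : c₁ * ((2 ^ (k + 1) * r) ^ (N + 1))⁻¹ * (2 ^ (k + 2) * r) ^ N
          = C₀ * 2 ^ (2 * N) * r * (2⁻¹ : ℝ) ^ k := by
        rw [hc₁def]
        have hk1 : ((2 : ℝ) ^ (k + 1) * r) ^ (N + 1) = 2 ^ ((k+1)*(N+1)) * r ^ (N+1) := by
          rw [mul_pow, ← pow_mul]
        have hk2 : ((2 : ℝ) ^ (k + 2) * r) ^ N = 2 ^ ((k+2)*N) * r ^ N := by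
          rw [mul_pow, ← pow_mul]
        rw [hk1, hk2, mul_inv, inv_pow]
        have h2ne : ∀ m : ℕ, ((2:ℝ) ^ m) ≠ 0 := fun m => by positivity
        have hrne : r ^ (N+1) ≠ 0 := by positivity
        field_simp
        ring
      have hofp : ENNReal.ofReal ((2⁻¹ : ℝ) ^ k) = (2⁻¹ : ℝ≥0∞) ^ k := by
        rw [ENNReal.ofReal_pow (by norm_num), ENNReal.ofReal_inv_of_pos (by norm_num),
          ENNReal.ofReal_ofNat]
      have e1 : ENNReal.ofReal (c₁ * ((2 ^ (k + 1) * r) ^ (N + 1))⁻¹ * (2 ^ (k + 2) * r) ^ N)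
          = ENNReal.ofReal (c₁ * ((2 ^ (k + 1) * r) ^ (N + 1))⁻¹)
            * ENNReal.ofReal ((2 ^ (k + 2) * r) ^ N) :=
        ENNReal.ofReal_mul (by positivity)
      have e2 : ENNReal.ofReal (C₀ * 2 ^ (2 * N) * r * (2⁻¹ : ℝ) ^ k)
          = ENNReal.ofReal (C₀ * 2 ^ (2 * N) * r) * ENNReal.ofReal ((2⁻¹ : ℝ) ^ k) :=
        ENNReal.ofReal_mul (by positivity)
      calc ENNReal.ofReal (c₁ * ((2 ^ (k + 1) * r) ^ (N + 1))⁻¹)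
            * (ENNReal.ofReal ((2 ^ (k + 2) * r) ^ N) * V * maxFn μ x)
          = ENNReal.ofReal (c₁ * ((2 ^ (k + 1) * r) ^ (N + 1))⁻¹ * (2 ^ (k + 2) * r) ^ N)
            * (V * maxFn μ x) := by
            rw [e1]; ring
      _ = ENNReal.ofReal (C₀ * 2 ^ (2 * N) * r * (2⁻¹ : ℝ) ^ k) * (V * maxFn μ x) := by
            rw [hreal]
      _ = (ENNReal.ofReal (C₀ * 2 ^ (2 * N) * r) * (V * maxFn μ x)) * (2⁻¹ : ℝ≥0∞) ^ k := by
            rw [e2, hofp]; ring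
    have t7 : ∑' k, ∫⁻ w in A k, ENNReal.ofReal (c₁ * (‖x - w‖ ^ (N + 1))⁻¹) ∂μ
        ≤ (ENNReal.ofReal (C₀ * 2 ^ (2 * N) * r) * (V * maxFn μ x)) * 2 := by
      calc ∑' k, ∫⁻ w in A k, ENNReal.ofReal (c₁ * (‖x - w‖ ^ (N + 1))⁻¹) ∂μ
          ≤ ∑' k, (ENNReal.ofReal (C₀ * 2 ^ (2 * N) * r) * (V * maxFn μ x)) * (2⁻¹ : ℝ≥0∞) ^ k :=
          ENNReal.tsum_le_tsum (fun k => by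
            rw [← t6 k]
            exact le_trans (t4 k) (mul_le_mul_right (t5 k) _))
      _ = (ENNReal.ofReal (C₀ * 2 ^ (2 * N) * r) * (V * maxFn μ x)) * ∑' k, (2⁻¹ : ℝ≥0∞) ^ k :=
          ENNReal.tsum_mul_left
      _ = (ENNReal.ofReal (C₀ * 2 ^ (2 * N) * r) * (V * maxFn μ x)) * 2 := by
          rw [ENNReal.tsum_geometric, ENNReal.one_sub_inv_two, inv_inv]
    have t8 : (ENNReal.ofReal (C₀ * 2 ^ (2 * N) * r) * (V * maxFn μ x)) * 2
        = ENNReal.ofReal (C₀ * 2 ^ (2 * N + 1) * Vr * r) * maxFn μ x := by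
      have e3 : ENNReal.ofReal (C₀ * 2 ^ (2 * N + 1) * Vr * r)
          = ENNReal.ofReal (C₀ * 2 ^ (2 * N) * r) * ENNReal.ofReal Vr * 2 := by
        rw [show C₀ * 2 ^ (2 * N + 1) * Vr * r = C₀ * 2 ^ (2 * N) * r * Vr * 2 by
          rw [pow_succ]; ring, ENNReal.ofReal_mul (by positivity),
          ENNReal.ofReal_mul (by positivity), ENNReal.ofReal_ofNat]
      rw [hVr, e3]
      ring
    calc ENNReal.ofReal |∫ w in S, h w ∂μ|
        ≤ ∑' k, ∫⁻ w in A k, ENNReal.ofReal (c₁ * (‖x - w‖ ^ (N + 1))⁻¹) ∂μ :=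
        le_trans t1 (le_trans t2 t3)
    _ ≤ (ENNReal.ofReal (C₀ * 2 ^ (2 * N) * r) * (V * maxFn μ x)) * 2 := t7
    _ = ENNReal.ofReal (C₀ * 2 ^ (2 * N + 1) * Vr * r) * maxFn μ x := t8
  -- combine
  have habs : |∫ w in S, (K (y - w) - K (x - w)) ∂μ|
      ≤ |∫ w in S, h w ∂μ| + |∫ w in S, ⟪g w, y - x⟫ ∂μ| := by
    rw [hsplit]; exact abs_add_le _ _
  calc ENNReal.ofReal |∫ w in S, (K (y - w) - K (x - w)) ∂μ|
      ≤ ENNReal.ofReal (|∫ w in S, h w ∂μ| + |∫ w in S, ⟪g w, y - x⟫ ∂μ|) :=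
      ENNReal.ofReal_le_ofReal habs
  _ ≤ ENNReal.ofReal |∫ w in S, h w ∂μ| + ENNReal.ofReal |∫ w in S, ⟪g w, y - x⟫ ∂μ| :=
      ENNReal.ofReal_add_le
  _ ≤ ENNReal.ofReal (C₀ * 2 ^ (2 * N + 1) * Vr * r) * maxFn μ x
      + ENNReal.ofReal r * maxSing K μ x := add_le_add herr hmain
  _ ≤ ENNReal.ofReal (C * r) * maxFn μ x + ENNReal.ofReal (C * r) * maxSing K μ x := by
      refine add_le_add (mul_le_mul_left (ENNReal.ofReal_le_ofReal ?_) _)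
        (mul_le_mul_left (ENNReal.ofReal_le_ofReal ?_) _)
      · refine mul_le_mul_of_nonneg_right ?_ hr.le
        rw [hCdef]
        have h2 : (2 : ℝ) ^ (2 * N + 1) ≤ 2 ^ (2 * N + 2) := by
          apply pow_le_pow_right₀ (by norm_num); omega
        have h3 : C₀ * 2 ^ (2 * N + 1) * Vr ≤ C₀ * 2 ^ (2 * N + 2) * Vr :=
          mul_le_mul_of_nonneg_right (mul_le_mul_of_nonneg_left h2 hC₀) hVr0
        have h4 : (0:ℝ) ≤ C₀ * 2 ^ (N + 1) := by positivity
        linarith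
      · rw [hCdef]
        nlinarith [mul_nonneg (mul_nonneg (mul_nonneg hC₀
            (pow_nonneg (by norm_num : (0:ℝ) ≤ 2) (2 * N + 2))) hVr0) hr.le,
          mul_nonneg (mul_nonneg hC₀
            (pow_nonneg (by norm_num : (0:ℝ) ≤ 2) (N + 1))) hr.le]
  _ = ENNReal.ofReal (C * r) * (maxFn μ x + maxSing K μ x) := (mul_add _ _ _).symm
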